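/- arXiv:1601.00914 — 3 statements merged into one kernel-verified Lean document; each statement's English description precedes it below -/
import Mathlib

section
/- For every ε > 0, lim_{N→∞} limsup_{T→∞} (1/T)·Leb{ u ∈ [T, 2T] : |B_N(u)| > N^{1/2+ε} } = 0, where B_N(u) = Σ_{n=1}^N cos(u·log p_n) and Leb denotes Lebesgue measure. That is, the probability that a uniformly random u ∈ [T,2T] gives |B_N(u)| exceeding N^{1/2+ε} tends to 0 in the iterated limit T → ∞ then N → ∞. -/
open MeasureTheory Filter intervalIntegral

private noncomputable def aa (n : ℕ) : ℝ := Real.log (Nat.nth Nat.Prime n)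

private noncomputable def KK (N : ℕ) : ℝ :=
  ∑ n ∈ Finset.range N, ∑ m ∈ Finset.range N, (1/|aa n - aa m| + 2)

private lemma aa_ge (n : ℕ) : 1/2 ≤ aa n := by
  have hp : Nat.Prime (Nat.nth Nat.Prime n) := Nat.nth_mem_of_infinite Nat.infinite_setOf_prime n
  have h2 : (2:ℝ) ≤ (Nat.nth Nat.Prime n : ℝ) := by exact_mod_cast hp.two_le
  calc (1:ℝ)/2 ≤ Real.log 2 := by
        have := Real.log_two_gt_d9; linarith
    _ ≤ aa n := Real.log_le_log (by norm_num) h2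

private lemma aa_inj : Function.Injective aa := by
  have h1 : StrictMono (Nat.nth Nat.Prime) := Nat.nth_strictMono Nat.infinite_setOf_prime
  have h2 : StrictMono aa := by
    intro n m h
    have hp : Nat.Prime (Nat.nth Nat.Prime n) := Nat.nth_mem_of_infinite Nat.infinite_setOf_prime n
    exact Real.log_lt_log (by exact_mod_cast hp.pos) (by exact_mod_cast h1 h)
  exact h2.injective

private lemma intJ (k T : ℝ) (hk : k ≠ 0) :
    ∫ u in T..2*T, Real.cos (u * k) = (Real.sin (k*(2*T)) - Real.sin (k*T)) / k := by
  have h := intervalIntegral.integral_comp_mul_left (f := Real.cos) (a := T) (b := 2*T) hk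
  simp only [integral_cos, smul_eq_mul] at h
  calc ∫ u in T..2*T, Real.cos (u * k) = ∫ u in T..2*T, Real.cos (k * u) := by
        congr 1; ext u; rw [mul_comm]
    _ = (Real.sin (k*(2*T)) - Real.sin (k*T)) / k := by rw [h]; ring

private lemma intJ_bound (k T : ℝ) (hk : k ≠ 0) :
    |∫ u in T..2*T, Real.cos (u * k)| ≤ 2 / |k| := by
  rw [intJ k T hk, abs_div]
  gcongr
  calc |Real.sin (k*(2*T)) - Real.sin (k*T)| ≤ |Real.sin (k*(2*T))| + |Real.sin (k*T)| :=
        abs_sub _ _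
    _ ≤ 1 + 1 := add_le_add (Real.abs_sin_le_one _) (Real.abs_sin_le_one _)
    _ = 2 := by norm_num

private lemma cos_ii (k : ℝ) (a b : ℝ) :
    IntervalIntegrable (fun u => Real.cos (u * k)) volume a b :=
  (Real.continuous_cos.comp (continuous_id.mul continuous_const)).intervalIntegrable a b

private lemma pair_bound (T b c : ℝ) (hb : 1/2 ≤ b) (hc : 1/2 ≤ c) :
    ∫ u in T..2*T, Real.cos (u*b) * Real.cos (u*c) ≤
      (if b = c then T/2 else 0) + (1/|b - c| + 2) := by
  by_cases h : b = c
  · subst h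
    simp only [if_pos rfl, sub_self, abs_zero]
    have hb0 : b ≠ 0 := by linarith
    have h2b : (2:ℝ)*b ≠ 0 := by positivity
    rw [show (fun u => Real.cos (u*b) * Real.cos (u*b)) = fun u => 1/2 + Real.cos (u*(2*b))/2 by
      ext u
      have := Real.cos_sq (u*b)
      rw [← sq] at *
      rw [this]; ring_nf]
    rw [intervalIntegral.integral_add (intervalIntegrable_const)
      ((cos_ii (2*b) T (2*T)).div_const 2)]
    have h1 : ∫ u in T..2*T, (1:ℝ)/2 = T/2 := by
      simp [intervalIntegral.integral_const]; ring
    have h2 : ∫ u in T..2*T, Real.cos (u*(2*b))/2 = (∫ u in T..2*T, Real.cos (u*(2*b)))/2 := by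
      rw [intervalIntegral.integral_div]
    rw [h1, h2]
    have h3 : (∫ u in T..2*T, Real.cos (u*(2*b)))/2 ≤ 1 := by
      have := intJ_bound (2*b) T h2b
      have h4 : (2:ℝ)/|2*b| ≤ 2 := by
        rw [abs_of_pos (by linarith : (0:ℝ) < 2*b)]
        rw [div_le_iff₀ (by linarith)]; linarith
      have h5 := (abs_le.mp (le_trans this h4)).2
      linarith
    simp only [if_true, div_zero]
    linarith
  · simp only [if_neg h, zero_add]
    have hbc : b - c ≠ 0 := sub_ne_zero.mpr h
    have hbc' : b + c ≠ 0 := by intro hh; linarith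
    rw [show (fun u => Real.cos (u*b) * Real.cos (u*c))
        = fun u => Real.cos (u*(b-c))/2 + Real.cos (u*(b+c))/2 by
      ext u
      have := Real.two_mul_cos_mul_cos (u*b) (u*c)
      have e1 : u*b - u*c = u*(b-c) := by ring
      have e2 : u*b + u*c = u*(b+c) := by ring
      rw [e1, e2] at this
      linarith]
    rw [intervalIntegral.integral_add ((cos_ii (b-c) T (2*T)).div_const 2)
      ((cos_ii (b+c) T (2*T)).div_const 2), intervalIntegral.integral_div,
      intervalIntegral.integral_div]
    have b1 := (abs_le.mp (intJ_bound (b-c) T hbc)).2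
    have b2 := (abs_le.mp (intJ_bound (b+c) T hbc')).2
    have h4 : (2:ℝ)/|b+c| ≤ 2 := by
      rw [abs_of_pos (by linarith : (0:ℝ) < b+c)]
      rw [div_le_iff₀ (by linarith)]; linarith
    have hpos : (0:ℝ) < |b-c| := abs_pos.mpr hbc
    have : (2:ℝ)/|b-c| = 2 * (1/|b-c|) := by ring
    rw [this] at b1
    nlinarith [one_div_pos.mpr hpos]

set_option maxHeartbeats 1000000 in
private lemma sq_sum_integral (N : ℕ) (T : ℝ) :
    ∫ u in T..2*T, (∑ n ∈ Finset.range N, Real.cos (u * aa n))^2 ≤ N * (T/2) + KK N := by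
  have hii : ∀ n m : ℕ, IntervalIntegrable
      (fun u => Real.cos (u * aa n) * Real.cos (u * aa m)) volume T (2*T) := by
    intro n m
    exact ((Real.continuous_cos.comp (continuous_id.mul continuous_const)).mul
      (Real.continuous_cos.comp (continuous_id.mul continuous_const))).intervalIntegrable T (2*T)
  have hsq : (fun u => (∑ n ∈ Finset.range N, Real.cos (u * aa n))^2)
      = fun u => ∑ n ∈ Finset.range N, ∑ m ∈ Finset.range N,
          Real.cos (u * aa n) * Real.cos (u * aa m) := by
    ext u; rw [sq, Finset.sum_mul_sum]
  have hout := intervalIntegral.integral_finset_sum (a := T) (b := 2*T) (μ := volume)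
    (s := Finset.range N)
    (f := fun n u => ∑ m ∈ Finset.range N, Real.cos (u * aa n) * Real.cos (u * aa m))
    (fun n _ => (continuous_finset_sum _ (fun m _ =>
      (Real.continuous_cos.comp (continuous_id.mul continuous_const)).mul
      (Real.continuous_cos.comp (continuous_id.mul continuous_const)))).intervalIntegrable T (2*T))
  rw [hsq, hout]
  have heq : ∀ n ∈ Finset.range N,
      (∫ u in T..2*T, ∑ m ∈ Finset.range N, Real.cos (u * aa n) * Real.cos (u * aa m))
      = ∑ m ∈ Finset.range N, ∫ u in T..2*T, Real.cos (u * aa n) * Real.cos (u * aa m) := by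
    intro n _
    exact intervalIntegral.integral_finset_sum (fun m _ => hii n m)
  rw [Finset.sum_congr rfl heq]
  have hle : ∑ n ∈ Finset.range N, ∑ m ∈ Finset.range N,
      (∫ u in T..2*T, Real.cos (u * aa n) * Real.cos (u * aa m))
      ≤ ∑ n ∈ Finset.range N, ∑ m ∈ Finset.range N,
        ((if n = m then T/2 else 0) + (1/|aa n - aa m| + 2)) := by
    apply Finset.sum_le_sum; intro n _
    apply Finset.sum_le_sum; intro m _
    have := pair_bound T (aa n) (aa m) (aa_ge n) (aa_ge m)
    have hiff : (aa n = aa m) ↔ (n = m) := ⟨fun h => aa_inj h, fun h => by rw [h]⟩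
    rwa [if_congr hiff rfl rfl] at this
  refine hle.trans ?_
  have : ∀ n ∈ Finset.range N, ∑ m ∈ Finset.range N,
      ((if n = m then T/2 else 0) + (1/|aa n - aa m| + 2))
      = T/2 + ∑ m ∈ Finset.range N, (1/|aa n - aa m| + 2) := by
    intro n hn
    rw [Finset.sum_add_distrib, Finset.sum_ite_eq, if_pos hn]
  rw [Finset.sum_congr rfl this, Finset.sum_add_distrib, Finset.sum_const, Finset.card_range,
    nsmul_eq_mul, KK]

private lemma cheb (N : ℕ) (T lam : ℝ) (hT : 0 < T) (hlam : 0 < lam) :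
    (volume {u : ℝ | u ∈ Set.Icc T (2*T) ∧
      lam < |∑ n ∈ Finset.range N, Real.cos (u * aa n)|}).toReal
      ≤ ((N : ℝ) * (T/2) + KK N) / lam^2 := by
  set f : ℝ → ℝ := fun u => (∑ n ∈ Finset.range N, Real.cos (u * aa n))^2 with hf
  have hcont : Continuous f := by
    apply Continuous.pow
    exact continuous_finset_sum _ (fun n _ =>
      Real.continuous_cos.comp (continuous_id.mul continuous_const))
  set μ := volume.restrict (Set.Icc T (2*T)) with hμ
  have hint : Integrable f μ := hcont.integrableOn_Icc
  have hnn : 0 ≤ᵐ[μ] f := Filter.Eventually.of_forall (fun u => sq_nonneg _)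
  have markov := mul_meas_ge_le_integral_of_nonneg hnn hint (lam^2)
  have hIeq : ∫ x, f x ∂μ ≤ (N : ℝ) * (T/2) + KK N := by
    have h1 : ∫ x, f x ∂μ = ∫ x in Set.Icc T (2*T), f x := rfl
    have h2 : ∫ x in Set.Icc T (2*T), f x = ∫ x in T..2*T, f x := by
      rw [intervalIntegral.integral_of_le (by linarith : T ≤ 2*T),
        ← MeasureTheory.integral_Icc_eq_integral_Ioc]
    rw [h1, h2]
    exact sq_sum_integral N T
  set S := {u : ℝ | u ∈ Set.Icc T (2*T) ∧
      lam < |∑ n ∈ Finset.range N, Real.cos (u * aa n)|} with hS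
  have hsub : S ⊆ {x | lam^2 ≤ f x} ∩ Set.Icc T (2*T) := by
    rintro u ⟨hu1, hu2⟩
    refine ⟨?_, hu1⟩
    have : lam^2 ≤ |∑ n ∈ Finset.range N, Real.cos (u * aa n)|^2 :=
      pow_le_pow_left₀ hlam.le hu2.le 2
    simpa [hf, sq_abs] using this
  have hms : MeasurableSet {x : ℝ | lam^2 ≤ f x} :=
    measurableSet_le measurable_const hcont.measurable
  have hrest : μ {x | lam^2 ≤ f x} = volume ({x | lam^2 ≤ f x} ∩ Set.Icc T (2*T)) :=
    Measure.restrict_apply hms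
  have hfin : volume ({x | lam^2 ≤ f x} ∩ Set.Icc T (2*T)) < ⊤ :=
    lt_of_le_of_lt (measure_mono Set.inter_subset_right) measure_Icc_lt_top
  have hvle : (volume S).toReal ≤ (μ {x | lam^2 ≤ f x}).toReal := by
    rw [hrest]
    exact ENNReal.toReal_mono hfin.ne (measure_mono hsub)
  have hfinal : lam^2 * (volume S).toReal ≤ (N : ℝ) * (T/2) + KK N := by
    calc lam^2 * (volume S).toReal ≤ lam^2 * (μ {x | lam^2 ≤ f x}).toReal :=
          mul_le_mul_of_nonneg_left hvle (by positivity)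
      _ ≤ ∫ x, f x ∂μ := markov
      _ ≤ _ := hIeq
  rw [le_div_iff₀ (by positivity : (0:ℝ) < lam^2)]
  linarith

private lemma limsup_bounds (N : ℕ) (lam : ℝ) (hlam : 0 < lam) :
    0 ≤ Filter.limsup (fun T : ℝ =>
      (volume {u : ℝ | u ∈ Set.Icc T (2*T) ∧
        lam < |∑ n ∈ Finset.range N, Real.cos (u * aa n)|}).toReal / T) atTop ∧
    Filter.limsup (fun T : ℝ =>
      (volume {u : ℝ | u ∈ Set.Icc T (2*T) ∧
        lam < |∑ n ∈ Finset.range N, Real.cos (u * aa n)|}).toReal / T) atTop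
      ≤ (N : ℝ)/(2*lam^2) := by
  set f : ℝ → ℝ := fun T =>
    (volume {u : ℝ | u ∈ Set.Icc T (2*T) ∧
      lam < |∑ n ∈ Finset.range N, Real.cos (u * aa n)|}).toReal / T with hfdef
  set g : ℝ → ℝ := fun T => (N : ℝ)/(2*lam^2) + (KK N/lam^2) * (1/T) with hgdef
  have hfg : ∀ᶠ T in atTop, f T ≤ g T := by
    filter_upwards [eventually_gt_atTop (0:ℝ)] with T hT
    have h1 := cheb N T lam hT hlam
    have h2 : f T ≤ (((N : ℝ) * (T/2) + KK N) / lam^2) / T :=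
      div_le_div_of_nonneg_right h1 hT.le
    refine h2.trans ?_
    rw [hgdef]
    have hl2 : lam^2 ≠ 0 := by positivity
    field_simp
    exact le_rfl
  have hf0 : ∀ᶠ T in atTop, 0 ≤ f T := by
    filter_upwards [eventually_gt_atTop (0:ℝ)] with T hT
    exact div_nonneg ENNReal.toReal_nonneg hT.le
  have hg_tendsto : Tendsto g atTop (nhds ((N : ℝ)/(2*lam^2))) := by
    have h1 : Tendsto (fun T : ℝ => (KK N/lam^2) * (1/T)) atTop (nhds 0) := by
      have := tendsto_inv_atTop_zero (𝕜 := ℝ)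
      simpa [one_div] using this.const_mul (KK N/lam^2)
    have h2 : Tendsto (fun T : ℝ => (N : ℝ)/(2*lam^2) + (KK N/lam^2) * (1/T)) atTop
        (nhds ((N : ℝ)/(2*lam^2) + 0)) := Tendsto.add tendsto_const_nhds h1
    simpa [hgdef] using h2
  have hgbdd : IsBoundedUnder (· ≤ ·) atTop g := hg_tendsto.isBoundedUnder_le
  have hfbdd : IsBoundedUnder (· ≤ ·) atTop f := hgbdd.mono_le hfg
  have hfcob : IsCoboundedUnder (· ≤ ·) atTop f :=
    isCoboundedUnder_le_of_eventually_le atTop hf0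
  constructor
  · exact le_limsup_of_frequently_le hf0.frequently hfbdd
  · calc limsup f atTop ≤ limsup g atTop := limsup_le_limsup hfg hfcob hgbdd
      _ = (N : ℝ)/(2*lam^2) := hg_tendsto.limsup_eq

set_option maxHeartbeats 1000000 in
/-- For every `ε > 0`, with `B_N(u) = ∑_{n=1}^N cos(u log p_n)`, the
probability that a uniformly random `u ∈ [T, 2T]` gives `|B_N(u)| > N^{1/2+ε}` tends
to `0` in the iterated limit: first `limsup` as `T → ∞`, then `N → ∞`. -/
theorem BN_small_probability (B : ℕ → ℝ → ℝ)
    (hB : ∀ N u, B N u = ∑ n ∈ Finset.range N, Real.cos (u * Real.log (Nat.nth Nat.Prime n)))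
    (ε : ℝ) (hε : 0 < ε) :
    Tendsto (fun N : ℕ =>
      Filter.limsup (fun T : ℝ =>
        (volume {u : ℝ | u ∈ Set.Icc T (2 * T) ∧
          (N : ℝ) ^ ((1 : ℝ) / 2 + ε) < |B N u|}).toReal / T) atTop)
      atTop (nhds 0) := by
  have hset : ∀ (N : ℕ) (T : ℝ),
      {u : ℝ | u ∈ Set.Icc T (2 * T) ∧ (N : ℝ) ^ ((1 : ℝ) / 2 + ε) < |B N u|}
      = {u : ℝ | u ∈ Set.Icc T (2*T) ∧
          (N : ℝ) ^ ((1 : ℝ) / 2 + ε) < |∑ n ∈ Finset.range N, Real.cos (u * aa n)|} := by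
    intro N T
    ext u
    simp only [Set.mem_setOf_eq, hB, aa]
  simp only [hset]
  have hval : ∀ N : ℕ, 1 ≤ N →
      (N : ℝ)/(2*((N : ℝ) ^ ((1 : ℝ) / 2 + ε))^2) = (1/2) * (N : ℝ) ^ (-(2*ε)) := by
    intro N hN
    have hNpos : (0:ℝ) < (N:ℝ) := by exact_mod_cast hN
    have hsq : ((N : ℝ) ^ ((1 : ℝ) / 2 + ε))^2 = (N : ℝ) ^ ((1:ℝ) + 2*ε) := by
      rw [← Real.rpow_natCast ((N : ℝ) ^ ((1 : ℝ) / 2 + ε)) 2, ← Real.rpow_mul hNpos.le]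
      norm_num
      ring_nf
    rw [hsq]
    have hneg : (N:ℝ) ^ (-(2*ε)) = (N:ℝ) / (N:ℝ) ^ ((1:ℝ)+2*ε) := by
      rw [show -(2*ε) = 1 - ((1:ℝ)+2*ε) by ring, Real.rpow_sub hNpos, Real.rpow_one]
    rw [hneg]
    ring
  have hupper : Tendsto (fun N : ℕ => (1/2) * (N : ℝ) ^ (-(2*ε))) atTop (nhds 0) := by
    have h1 : Tendsto (fun N : ℕ => ((N : ℝ)) ^ (-(2*ε))) atTop (nhds 0) :=
      (tendsto_rpow_neg_atTop (by positivity)).comp tendsto_natCast_atTop_atTop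
    simpa using h1.const_mul (1/2 : ℝ)
  refine tendsto_of_tendsto_of_tendsto_of_le_of_le' tendsto_const_nhds hupper ?_ ?_
  · filter_upwards [eventually_ge_atTop 1] with N hN
    have hNpos : (0:ℝ) < (N:ℝ) := by exact_mod_cast hN
    exact (limsup_bounds N _ (Real.rpow_pos_of_pos hNpos _)).1
  · filter_upwards [eventually_ge_atTop 1] with N hN
    have hNpos : (0:ℝ) < (N:ℝ) := by exact_mod_cast hN
    exact ((limsup_bounds N _ (Real.rpow_pos_of_pos hNpos _)).2).trans_eq (hval N hN)
end

section
/- Let χ be a non-principal Dirichlet character modulo k and let p_n denote the n-th prime. Suppose that for every real t there exists a constant C > 0 such that |Σ_{n=1}^N χ(p_n)·p_n^{-it}| ≤ C·√N for all positive integers N. Then for every complex s with Re(s) > 1/2, the Euler product Π_{n=1}^∞ (1 − χ(p_n)·p_n^{-s})^{-1} converges and equals the Dirichlet L-function L(s, χ); in particular, L(s, χ) ≠ 0 for all s with Re(s) > 1/2. -/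
open Complex Filter Topology

private lemma nth_prime_ge (n : ℕ) : n + 1 ≤ Nat.nth Nat.Prime n :=
  le_trans (by omega) (Nat.add_two_le_nth_prime n)

private lemma nth_prime_two_le (n : ℕ) : 2 ≤ Nat.nth Nat.Prime n :=
  (Nat.prime_nth_prime n).two_le

private lemma nth_prime_cast_pos (n : ℕ) : (0:ℝ) < (Nat.nth Nat.Prime n : ℝ) := by
  have := nth_prime_ge n
  have : 0 < Nat.nth Nat.Prime n := by omega
  exact_mod_cast this


private lemma cpow_diff_bound {σ₀ M : ℝ} (hσ : 0 < σ₀) {w : ℂ} (hw : σ₀ ≤ w.re)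
    (hM : ‖w‖ ≤ M) {x y : ℝ} (hx : 1 ≤ x) (hxy : x ≤ y) :
    ‖(x : ℂ) ^ (-w) - (y : ℂ) ^ (-w)‖ ≤ M / σ₀ * (x ^ (-σ₀) - y ^ (-σ₀)) := by
  have hx0 : (0:ℝ) < x := lt_of_lt_of_le one_pos hx
  have hy0 : (0:ℝ) < y := lt_of_lt_of_le hx0 hxy
  have hw0 : w ≠ 0 := by
    intro h; rw [h] at hw; simp at hw; linarith
  have hM0 : 0 < M := lt_of_lt_of_le (lt_of_lt_of_le hσ hw) (le_trans (le_trans (le_abs_self _) (Complex.abs_re_le_norm w)) hM)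
  have h0mem : (0:ℝ) ∉ Set.uIcc x y := by
    rw [Set.uIcc_of_le hxy]
    intro h; exact absurd h.1 (not_le.mpr hx0)
  -- integral identity
  have hr : (-w - 1) ≠ -1 := by
    intro h; apply hw0; have := sub_eq_iff_eq_add.mp h; simpa using this
  have hint : (∫ u in x..y, (u:ℂ) ^ (-w - 1)) = ((y:ℂ) ^ (-w) - (x:ℂ) ^ (-w)) / (-w) := by
    rw [integral_cpow (Or.inr ⟨hr, h0mem⟩)]
    norm_num
  have hkey : (x:ℂ) ^ (-w) - (y:ℂ) ^ (-w) = w * ∫ u in x..y, (u:ℂ) ^ (-w - 1) := by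
    rw [hint]
    have : (w : ℂ) ≠ 0 := hw0
    rw [mul_div_assoc', mul_comm, mul_div_assoc, div_neg, div_self this]
    ring
  rw [hkey]
  rw [norm_mul]
  -- bound the integral
  have hbd : ‖∫ u in x..y, (u:ℂ) ^ (-w - 1)‖ ≤ |∫ u in x..y, u ^ (-σ₀ - 1)| := by
    apply intervalIntegral.norm_integral_le_abs_of_norm_le
    · filter_upwards [MeasureTheory.ae_restrict_mem measurableSet_uIoc] with u hu
      rw [Set.uIoc_of_le hxy] at hu
      have hu1 : 1 ≤ u := le_of_lt (lt_of_le_of_lt hx hu.1)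
      have hu0 : 0 < u := lt_of_lt_of_le one_pos hu1
      rw [Complex.norm_cpow_eq_rpow_re_of_pos hu0]
      apply Real.rpow_le_rpow_of_exponent_le hu1
      simp only [Complex.sub_re, Complex.neg_re, Complex.one_re]
      linarith
    · apply ContinuousOn.intervalIntegrable
      apply ContinuousOn.rpow_const continuousOn_id
      intro u hu
      rw [Set.uIcc_of_le hxy] at hu
      exact Or.inl (ne_of_gt (lt_of_lt_of_le (lt_of_lt_of_le one_pos hx) hu.1))
  have hcomp : (∫ u in x..y, u ^ (-σ₀ - 1)) = (y ^ (-σ₀) - x ^ (-σ₀)) / (-σ₀) := by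
    rw [integral_rpow (Or.inr ⟨by intro h; linarith, h0mem⟩)]
    norm_num
  have hmono : y ^ (-σ₀) ≤ x ^ (-σ₀) := by
    rw [Real.rpow_neg (le_of_lt hx0), Real.rpow_neg (le_of_lt hy0)]
    exact inv_anti₀ (Real.rpow_pos_of_pos hx0 _) (Real.rpow_le_rpow (le_of_lt hx0) hxy (le_of_lt hσ))
  have habs : |∫ u in x..y, u ^ (-σ₀ - 1)| = (x ^ (-σ₀) - y ^ (-σ₀)) / σ₀ := by
    rw [hcomp, abs_div, abs_neg, abs_of_pos hσ, abs_of_nonpos (by linarith)]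
    ring
  calc ‖w‖ * ‖∫ u in x..y, (u:ℂ) ^ (-w - 1)‖
      ≤ M * ((x ^ (-σ₀) - y ^ (-σ₀)) / σ₀) := by
        apply mul_le_mul hM (le_trans hbd (le_of_eq habs)) (norm_nonneg _) (le_of_lt hM0)
    _ = M / σ₀ * (x ^ (-σ₀) - y ^ (-σ₀)) := by ring


private lemma nth_prime_cast_ge (n : ℕ) : (n : ℝ) + 1 ≤ (Nat.nth Nat.Prime n : ℝ) := by
  have := nth_prime_ge n; exact_mod_cast this

private lemma c_antitone {σ₀ : ℝ} (hσ : 0 < σ₀) (n : ℕ) :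
    ((Nat.nth Nat.Prime (n+1) : ℝ)) ^ (-σ₀) ≤ ((Nat.nth Nat.Prime n : ℝ)) ^ (-σ₀) := by
  have h0 : (0:ℝ) < (Nat.nth Nat.Prime n : ℝ) := by exact_mod_cast (show 0 < Nat.nth Nat.Prime n by have := nth_prime_ge n; omega)
  have hle : ((Nat.nth Nat.Prime n : ℝ)) ≤ ((Nat.nth Nat.Prime (n+1) : ℝ)) := by
    exact_mod_cast le_of_lt ((Nat.nth_strictMono Nat.infinite_setOf_prime) (Nat.lt_succ_self n))
  rw [Real.rpow_neg (le_of_lt h0), Real.rpow_neg (by linarith)]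
  exact inv_anti₀ (Real.rpow_pos_of_pos h0 _) (Real.rpow_le_rpow (le_of_lt h0) hle (le_of_lt hσ))

private lemma c_le {σ₀ : ℝ} (hσ : 0 < σ₀) (n : ℕ) :
    ((Nat.nth Nat.Prime n : ℝ)) ^ (-σ₀) ≤ ((n : ℝ) + 1) ^ (-σ₀) := by
  have h1 : (0:ℝ) < (n:ℝ) + 1 := by positivity
  rw [Real.rpow_neg (le_of_lt h1), Real.rpow_neg (by positivity)]
  exact inv_anti₀ (Real.rpow_pos_of_pos h1 _)
    (Real.rpow_le_rpow (le_of_lt h1) (nth_prime_cast_ge n) (le_of_lt hσ))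

private lemma abel_majorant_summable {σ₀ : ℝ} (hσ : 1/2 < σ₀) :
    Summable (fun n : ℕ => Real.sqrt (n+1) *
      (((Nat.nth Nat.Prime n : ℝ)) ^ (-σ₀) - ((Nat.nth Nat.Prime (n+1) : ℝ)) ^ (-σ₀))) := by
  have hσ0 : 0 < σ₀ := by linarith
  set c : ℕ → ℝ := fun n => ((Nat.nth Nat.Prime n : ℝ)) ^ (-σ₀) with hc
  set g : ℕ → ℝ := fun n => ((n:ℝ) + 1) ^ (-(σ₀ + 1/2)) with hg
  have hgsum : Summable g := by
    have : Summable (fun n : ℕ => ((n:ℝ)) ^ (-(σ₀ + 1/2))) := by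
      rw [Real.summable_nat_rpow]; linarith
    have h := (summable_nat_add_iff 1).mpr this
    apply h.congr
    intro n; simp [hg]
  have hterm_nonneg : ∀ n : ℕ, 0 ≤ Real.sqrt (n+1) * (c n - c (n+1)) := by
    intro n
    apply mul_nonneg (Real.sqrt_nonneg _)
    simp only [sub_nonneg, hc]
    exact c_antitone hσ0 n
  have key : ∀ N : ℕ, (∑ n ∈ Finset.range N, Real.sqrt (n+1) * (c n - c (n+1)))
      + Real.sqrt N * c N ≤ ∑ n ∈ Finset.range N, g n := by
    intro N
    induction N with
    | zero => simp
    | succ N ih =>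
      rw [Finset.sum_range_succ, Finset.sum_range_succ]
      have hstep : (Real.sqrt (N+1) - Real.sqrt N) * c N ≤ g N := by
        have h1 : Real.sqrt (N+1) - Real.sqrt N ≤ ((N:ℝ)+1) ^ (-(1/2) : ℝ) := by
          have hs : Real.sqrt (N+1) - Real.sqrt N ≤ 1 / Real.sqrt (N+1) := by
            have hp : 0 < Real.sqrt ((N:ℝ)+1) := Real.sqrt_pos.mpr (by positivity)
            rw [sub_le_iff_le_add, div_add' _ _ _ (ne_of_gt hp)]
            rw [le_div_iff₀ hp]
            nlinarith [Real.sq_sqrt (show (0:ℝ) ≤ (N:ℝ)+1 by positivity),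
              Real.sqrt_nonneg ((N:ℝ)), Real.sq_sqrt (show (0:ℝ) ≤ (N:ℝ) by positivity),
              Real.sqrt_le_sqrt (show (N:ℝ) ≤ (N:ℝ)+1 by linarith)]
          rw [Real.rpow_neg (by positivity), ← Real.sqrt_eq_rpow]
          simpa [one_div] using hs
        have h2 : c N ≤ ((N:ℝ)+1) ^ (-σ₀) := c_le hσ0 N
        have h3 : 0 ≤ c N := Real.rpow_nonneg (by positivity) _
        have h4 : (0:ℝ) ≤ ((N:ℝ)+1) ^ (-(1/2):ℝ) := Real.rpow_nonneg (by positivity) _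
        calc (Real.sqrt (N+1) - Real.sqrt N) * c N
            ≤ ((N:ℝ)+1) ^ (-(1/2):ℝ) * (((N:ℝ)+1) ^ (-σ₀)) := by
              apply mul_le_mul h1 h2 h3 h4
          _ = g N := by
              rw [hg, ← Real.rpow_add (by positivity)]
              norm_num
      push_cast
      push_cast at ih hstep
      nlinarith [hstep, ih]
  apply summable_of_sum_range_le hterm_nonneg
  intro N
  calc (∑ n ∈ Finset.range N, Real.sqrt (n+1) * (c n - c (n+1)))
      ≤ (∑ n ∈ Finset.range N, Real.sqrt (n+1) * (c n - c (n+1))) + Real.sqrt N * c N := by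
        have : 0 ≤ Real.sqrt N * c N :=
          mul_nonneg (Real.sqrt_nonneg _) (Real.rpow_nonneg (by positivity) _)
        linarith
    _ ≤ ∑ n ∈ Finset.range N, g n := key N
    _ ≤ ∑' n, g n := Summable.sum_le_tsum _ (fun n _ => Real.rpow_nonneg (by positivity) _) hgsum


private lemma abel_identity (a : ℕ → ℂ) (b : ℕ → ℂ) (N : ℕ) :
    ∑ n ∈ Finset.range N, a n * b n =
      (∑ n ∈ Finset.range N, a n) * b N +
      ∑ n ∈ Finset.range N, (∑ k ∈ Finset.range (n+1), a k) * (b n - b (n+1)) := by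
  induction N with
  | zero => simp
  | succ N ih =>
    rw [Finset.sum_range_succ, ih, Finset.sum_range_succ
      (f := fun n => (∑ k ∈ Finset.range (n+1), a k) * (b n - b (n+1))),
      Finset.sum_range_succ (f := a)]
    ring



private noncomputable def bb (w : ℂ) (n : ℕ) : ℂ := ((Nat.nth Nat.Prime n : ℕ) : ℂ) ^ (-w)

private noncomputable def AA (a : ℕ → ℂ) (N : ℕ) : ℂ := ∑ n ∈ Finset.range N, a n

private noncomputable def ff (a : ℕ → ℂ) (w : ℂ) (n : ℕ) : ℂ := a n * bb w n

private noncomputable def SS (a : ℕ → ℂ) (w : ℂ) : ℂ :=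
  ∑' n, AA a (n+1) * (bb w n - bb w (n+1))

private noncomputable def RR (a : ℕ → ℂ) (w : ℂ) : ℂ :=
  ∑' n, (Complex.log (1 - ff a w n)⁻¹ - ff a w n)

private noncomputable def GG (a : ℕ → ℂ) (w : ℂ) : ℂ := Complex.exp (SS a w + RR a w)

-- norm facts
private lemma bb_norm (w : ℂ) (n : ℕ) : ‖bb w n‖ = (Nat.nth Nat.Prime n : ℝ) ^ (-w.re) := by
  rw [bb, Complex.norm_natCast_cpow_of_pos (by have := nth_prime_ge n; omega)]
  simp

private lemma bb_ne_cast (n : ℕ) : ((Nat.nth Nat.Prime n : ℕ) : ℂ) ≠ 0 := by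
  have := nth_prime_ge n
  simp only [ne_eq, Nat.cast_eq_zero]
  omega

private lemma ff_norm_le {a : ℕ → ℂ} (ha1 : ∀ n, ‖a n‖ ≤ 1) {w : ℂ} {σ₀ : ℝ}
    (hσ : 0 < σ₀) (hw : σ₀ ≤ w.re) (n : ℕ) :
    ‖ff a w n‖ ≤ ((n:ℝ) + 1) ^ (-σ₀) := by
  rw [ff, norm_mul, bb_norm]
  have h1 : (Nat.nth Nat.Prime n : ℝ) ^ (-w.re) ≤ (Nat.nth Nat.Prime n : ℝ) ^ (-σ₀) := by
    apply Real.rpow_le_rpow_of_exponent_le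
    · have := nth_prime_two_le n; exact_mod_cast le_trans (by norm_num) (Nat.cast_le.mpr this)
    · linarith
  have h2 : (Nat.nth Nat.Prime n : ℝ) ^ (-σ₀) ≤ ((n:ℝ) + 1) ^ (-σ₀) := by
    have hp : (0:ℝ) < (n:ℝ) + 1 := by positivity
    rw [Real.rpow_neg (le_of_lt hp), Real.rpow_neg (le_of_lt (nth_prime_cast_pos n))]
    apply inv_anti₀ (Real.rpow_pos_of_pos hp _)
    apply Real.rpow_le_rpow (le_of_lt hp) _ (le_of_lt hσ)
    exact_mod_cast nth_prime_ge n
  calc ‖a n‖ * (Nat.nth Nat.Prime n : ℝ) ^ (-w.re)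
      ≤ 1 * (Nat.nth Nat.Prime n : ℝ) ^ (-σ₀) := by
        apply mul_le_mul (ha1 n) h1 (Real.rpow_nonneg (le_of_lt (nth_prime_cast_pos n)) _)
          zero_le_one
    _ ≤ ((n:ℝ) + 1) ^ (-σ₀) := by rw [one_mul]; exact h2

private lemma ff_norm_le_34 {a : ℕ → ℂ} (ha1 : ∀ n, ‖a n‖ ≤ 1) {w : ℂ}
    (hw : 1/2 ≤ w.re) (n : ℕ) : ‖ff a w n‖ ≤ 3/4 := by
  have h1 : ‖ff a w n‖ ≤ (Nat.nth Nat.Prime n : ℝ) ^ (-w.re) := by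
    rw [ff, norm_mul, bb_norm]
    calc ‖a n‖ * (Nat.nth Nat.Prime n : ℝ) ^ (-w.re)
        ≤ 1 * (Nat.nth Nat.Prime n : ℝ) ^ (-w.re) := by
          apply mul_le_mul_of_nonneg_right (ha1 n)
            (Real.rpow_nonneg (le_of_lt (nth_prime_cast_pos n)) _)
      _ = _ := one_mul _
  have h2 : (Nat.nth Nat.Prime n : ℝ) ^ (-w.re) ≤ (2:ℝ) ^ (-(1/2) : ℝ) := by
    calc (Nat.nth Nat.Prime n : ℝ) ^ (-w.re) ≤ (Nat.nth Nat.Prime n : ℝ) ^ (-(1/2) : ℝ) := by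
          apply Real.rpow_le_rpow_of_exponent_le
          · have := nth_prime_two_le n
            exact_mod_cast le_trans (by norm_num) (Nat.cast_le.mpr this)
          · linarith
      _ ≤ (2:ℝ) ^ (-(1/2) : ℝ) := by
          rw [Real.rpow_neg (le_of_lt (nth_prime_cast_pos n)), Real.rpow_neg (by norm_num)]
          apply inv_anti₀ (Real.rpow_pos_of_pos (by norm_num) _)
          apply Real.rpow_le_rpow (by norm_num) _ (by norm_num)
          exact_mod_cast nth_prime_two_le n
  have h3 : (2:ℝ) ^ (-(1/2) : ℝ) ≤ 3/4 := by
    rw [Real.rpow_neg (by norm_num), ← Real.sqrt_eq_rpow]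
    rw [inv_le_comm₀ (Real.sqrt_pos.mpr (by norm_num)) (by norm_num)]
    nlinarith [Real.sq_sqrt (show (0:ℝ) ≤ 2 by norm_num), Real.sqrt_nonneg (2:ℝ)]
  linarith

-- each factor is nonzero
private lemma one_sub_ff_re {a : ℕ → ℂ} (ha1 : ∀ n, ‖a n‖ ≤ 1) {w : ℂ}
    (hw : 1/2 ≤ w.re) (n : ℕ) : 1/4 ≤ (1 - ff a w n).re := by
  have h := ff_norm_le_34 ha1 hw n
  have hre : (ff a w n).re ≤ 3/4 := le_trans (Complex.re_le_norm _) h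
  simp only [Complex.sub_re, Complex.one_re]
  linarith

private lemma one_sub_ff_ne {a : ℕ → ℂ} (ha1 : ∀ n, ‖a n‖ ≤ 1) {w : ℂ}
    (hw : 1/2 ≤ w.re) (n : ℕ) : 1 - ff a w n ≠ 0 := by
  intro h
  have := one_sub_ff_re ha1 hw n
  rw [h] at this
  simp at this
  linarith

-- R term bound
private lemma Rterm_bound {a : ℕ → ℂ} (ha1 : ∀ n, ‖a n‖ ≤ 1) {w : ℂ} {σ₀ : ℝ}
    (hσ : 1/2 ≤ σ₀) (hw : σ₀ ≤ w.re) (n : ℕ) :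
    ‖Complex.log (1 - ff a w n)⁻¹ - ff a w n‖ ≤ 2 * ((n:ℝ) + 1) ^ (-(2*σ₀)) := by
  have hσ0 : 0 < σ₀ := by linarith
  have h34 : ‖ff a w n‖ ≤ 3/4 := ff_norm_le_34 ha1 (le_trans hσ hw) n
  have hlt1 : ‖ff a w n‖ < 1 := lt_of_le_of_lt h34 (by norm_num)
  have hb := Complex.norm_log_one_sub_inv_sub_self_le hlt1
  have he : ‖ff a w n‖ ≤ ((n:ℝ)+1) ^ (-σ₀) := ff_norm_le ha1 hσ0 hw n
  have hinv : (1 - ‖ff a w n‖)⁻¹ ≤ 4 := by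
    rw [inv_le_comm₀ (by linarith) (by norm_num)]
    linarith
  have hnn : (0:ℝ) ≤ ((n:ℝ)+1) ^ (-σ₀) := Real.rpow_nonneg (by positivity) _
  calc ‖Complex.log (1 - ff a w n)⁻¹ - ff a w n‖
      ≤ ‖ff a w n‖^2 * (1 - ‖ff a w n‖)⁻¹ / 2 := hb
    _ ≤ (((n:ℝ)+1) ^ (-σ₀))^2 * 4 / 2 := by
        apply div_le_div_of_nonneg_right _ (by norm_num)
        apply mul_le_mul (by
          apply pow_le_pow_left₀ (norm_nonneg _) he)
          hinv (inv_nonneg.mpr (by linarith)) (by positivity)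
    _ = 2 * ((n:ℝ) + 1) ^ (-(2*σ₀)) := by
        rw [sq, ← Real.rpow_add (by positivity)]
        ring_nf

private lemma Sterm_bound {C σ₀ M : ℝ} (hC : 0 ≤ C) (hσ : 0 < σ₀) {A : ℕ → ℂ}
    (hA : ∀ n : ℕ, ‖A (n+1)‖ ≤ C * Real.sqrt (n+1)) {w : ℂ} (hw1 : σ₀ ≤ w.re)
    (hw2 : ‖w‖ ≤ M) (n : ℕ) :
    ‖A (n+1) * (((Nat.nth Nat.Prime n : ℕ) : ℂ) ^ (-w) -
        ((Nat.nth Nat.Prime (n+1) : ℕ) : ℂ) ^ (-w))‖ ≤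
      C * (M / σ₀) * (Real.sqrt (n+1) *
        ((Nat.nth Nat.Prime n : ℝ) ^ (-σ₀) - (Nat.nth Nat.Prime (n+1) : ℝ) ^ (-σ₀))) := by
  have hx : (1:ℝ) ≤ (Nat.nth Nat.Prime n : ℝ) := by
    have := nth_prime_ge n; exact_mod_cast le_trans (by omega) this
  have hxy : ((Nat.nth Nat.Prime n : ℕ) : ℝ) ≤ ((Nat.nth Nat.Prime (n+1) : ℕ) : ℝ) := by
    exact_mod_cast le_of_lt ((Nat.nth_strictMono Nat.infinite_setOf_prime) (Nat.lt_succ_self n))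
  have hb := cpow_diff_bound hσ hw1 hw2 hx hxy
  rw [norm_mul]
  have hcast : ∀ m : ℕ, (((m : ℕ) : ℝ) : ℂ) = ((m : ℕ) : ℂ) := by intro m; push_cast; ring
  rw [hcast, hcast] at hb
  calc ‖A (n+1)‖ * ‖((Nat.nth Nat.Prime n : ℕ) : ℂ) ^ (-w) -
        ((Nat.nth Nat.Prime (n+1) : ℕ) : ℂ) ^ (-w)‖
      ≤ (C * Real.sqrt (n+1)) * (M / σ₀ *
          ((Nat.nth Nat.Prime n : ℝ) ^ (-σ₀) - (Nat.nth Nat.Prime (n+1) : ℝ) ^ (-σ₀))) := by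
        apply mul_le_mul (hA n) hb (norm_nonneg _)
        positivity
    _ = C * (M / σ₀) * (Real.sqrt (n+1) *
        ((Nat.nth Nat.Prime n : ℝ) ^ (-σ₀) - (Nat.nth Nat.Prime (n+1) : ℝ) ^ (-σ₀))) := by ring
private lemma AA_succ_norm {a : ℕ → ℂ} {C : ℝ}
    (hAb : ∀ N : ℕ, ‖AA a N‖ ≤ C * Real.sqrt N) (n : ℕ) :
    ‖AA a (n+1)‖ ≤ C * Real.sqrt ((n:ℝ)+1) := by
  have := hAb (n+1)
  push_cast at this
  exact this

private lemma S_summable {a : ℕ → ℂ} {C σ₀ M : ℝ} (hC : 0 ≤ C) (hσ : 1/2 < σ₀)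
    (hAb : ∀ N : ℕ, ‖AA a N‖ ≤ C * Real.sqrt N) {w : ℂ} (hw1 : σ₀ ≤ w.re) (hw2 : ‖w‖ ≤ M) :
    Summable (fun n => AA a (n+1) * (bb w n - bb w (n+1))) := by
  apply Summable.of_norm_bounded (((abel_majorant_summable hσ).mul_left (C * (M/σ₀))))
  intro n
  exact Sterm_bound hC (by linarith) (AA_succ_norm hAb) hw1 hw2 n

private lemma R_summable {a : ℕ → ℂ} (ha1 : ∀ n, ‖a n‖ ≤ 1) {σ₀ : ℝ} (hσ : 1/2 < σ₀)
    {w : ℂ} (hw : σ₀ ≤ w.re) :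
    Summable (fun n => Complex.log (1 - ff a w n)⁻¹ - ff a w n) := by
  have hmaj : Summable (fun n : ℕ => 2 * ((n:ℝ) + 1) ^ (-(2*σ₀))) := by
    apply Summable.mul_left
    have : Summable (fun n : ℕ => ((n:ℝ)) ^ (-(2*σ₀))) := by
      rw [Real.summable_nat_rpow]; linarith
    have h := (summable_nat_add_iff 1).mpr this
    apply h.congr
    intro n; push_cast; ring_nf
  apply Summable.of_norm_bounded hmaj
  intro n
  exact Rterm_bound ha1 (le_of_lt hσ) hw n

private lemma S_diffOn {a : ℕ → ℂ} {C : ℝ} (hC : 0 ≤ C)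
    (hAb : ∀ N : ℕ, ‖AA a N‖ ≤ C * Real.sqrt N) :
    DifferentiableOn ℂ (SS a) {w : ℂ | 1/2 < w.re} := by
  intro w₀ hw₀
  simp only [Set.mem_setOf_eq] at hw₀
  set σ₀ : ℝ := (1/2 + w₀.re)/2 with hσ₀def
  have hσ : 1/2 < σ₀ := by rw [hσ₀def]; linarith
  set M : ℝ := ‖w₀‖ + 1 with hMdef
  set V : Set ℂ := {w : ℂ | σ₀ < w.re} ∩ Metric.ball w₀ 1 with hVdef
  have hVopen : IsOpen V :=
    IsOpen.inter (isOpen_lt continuous_const Complex.continuous_re) Metric.isOpen_ball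
  have hw₀V : w₀ ∈ V := by
    constructor
    · simp only [Set.mem_setOf_eq]; rw [hσ₀def]; linarith
    · exact Metric.mem_ball_self one_pos
  have hdiff : DifferentiableOn ℂ (fun w => ∑' n, AA a (n+1) * (bb w n - bb w (n+1))) V := by
    apply differentiableOn_tsum_of_summable_norm
      (((abel_majorant_summable hσ).mul_left (C * (M/σ₀))))
    · intro n
      apply DifferentiableOn.const_mul
      apply DifferentiableOn.sub <;>
      · apply Differentiable.differentiableOn
        exact Differentiable.const_cpow (differentiable_id.neg) (Or.inl (bb_ne_cast _))
    · exact hVopen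
    · intro n w hw
      have hw1 : σ₀ < w.re := hw.1
      apply Sterm_bound hC (by linarith) (AA_succ_norm hAb) (le_of_lt hw1)
      have h' : dist w w₀ < 1 := Metric.mem_ball.mp hw.2
      rw [dist_eq_norm] at h'
      calc ‖w‖ = ‖w₀ + (w - w₀)‖ := by ring_nf
        _ ≤ ‖w₀‖ + ‖w - w₀‖ := norm_add_le _ _
        _ ≤ M := by rw [hMdef]; linarith
  exact ((hdiff.differentiableAt (hVopen.mem_nhds hw₀V)).differentiableWithinAt)

private lemma ff_diff (a : ℕ → ℂ) (n : ℕ) : Differentiable ℂ (fun w => ff a w n) := by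
  apply Differentiable.const_mul
  exact Differentiable.const_cpow (differentiable_id.neg) (Or.inl (bb_ne_cast _))

private lemma Rterm_diffAt {a : ℕ → ℂ} (ha1 : ∀ n, ‖a n‖ ≤ 1) (n : ℕ) {w : ℂ}
    (hw : 1/2 ≤ w.re) :
    DifferentiableAt ℂ (fun w => Complex.log (1 - ff a w n)⁻¹ - ff a w n) w := by
  have h1 : DifferentiableAt ℂ (fun w => 1 - ff a w n) w :=
    (differentiableAt_const _).sub ((ff_diff a n) w)
  have hne : 1 - ff a w n ≠ 0 := one_sub_ff_ne ha1 hw n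
  have h2 : DifferentiableAt ℂ (fun w => (1 - ff a w n)⁻¹) w := h1.inv hne
  apply DifferentiableAt.sub _ ((ff_diff a n) w)
  apply DifferentiableAt.clog h2
  rw [Complex.mem_slitPlane_iff]
  left
  rw [Complex.inv_re]
  apply div_pos (by linarith [one_sub_ff_re ha1 hw n])
  exact Complex.normSq_pos.mpr hne

private lemma R_diffOn {a : ℕ → ℂ} (ha1 : ∀ n, ‖a n‖ ≤ 1) :
    DifferentiableOn ℂ (RR a) {w : ℂ | 1/2 < w.re} := by
  intro w₀ hw₀
  simp only [Set.mem_setOf_eq] at hw₀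
  set σ₀ : ℝ := (1/2 + w₀.re)/2 with hσ₀def
  have hσ : 1/2 < σ₀ := by rw [hσ₀def]; linarith
  set V : Set ℂ := {w : ℂ | σ₀ < w.re} with hVdef
  have hVopen : IsOpen V := isOpen_lt continuous_const Complex.continuous_re
  have hw₀V : w₀ ∈ V := show σ₀ < w₀.re by rw [hσ₀def]; linarith
  have hmaj : Summable (fun n : ℕ => 2 * ((n:ℝ) + 1) ^ (-(2*σ₀))) := by
    apply Summable.mul_left
    have : Summable (fun n : ℕ => ((n:ℝ)) ^ (-(2*σ₀))) := by
      rw [Real.summable_nat_rpow]; linarith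
    have h := (summable_nat_add_iff 1).mpr this
    apply h.congr
    intro n; push_cast; ring_nf
  have hdiff : DifferentiableOn ℂ
      (fun w => ∑' n, (Complex.log (1 - ff a w n)⁻¹ - ff a w n)) V := by
    apply differentiableOn_tsum_of_summable_norm hmaj
    · intro n w hw
      have hw' : σ₀ < w.re := hw
      exact (Rterm_diffAt ha1 n (by linarith)).differentiableWithinAt
    · exact hVopen
    · intro n w hw
      have hw' : σ₀ < w.re := hw
      exact Rterm_bound ha1 (le_of_lt hσ) (le_of_lt hw') n
  exact ((hdiff.differentiableAt (hVopen.mem_nhds hw₀V)).differentiableWithinAt)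
private lemma boundary_tendsto {a : ℕ → ℂ} {C : ℝ} (hC : 0 < C)
    (hAb : ∀ N : ℕ, ‖AA a N‖ ≤ C * Real.sqrt N) {w : ℂ} (hw : 1/2 < w.re) :
    Tendsto (fun N : ℕ => AA a N * bb w N) atTop (𝓝 0) := by
  apply squeeze_zero_norm (a := fun N : ℕ => C * ((N:ℝ)+1) ^ (1/2 - w.re))
  · intro N
    rw [norm_mul, bb_norm]
    have h1 : ‖AA a N‖ ≤ C * ((N:ℝ)+1) ^ ((1:ℝ)/2) := by
      refine le_trans (hAb N) ?_
      apply mul_le_mul_of_nonneg_left _ (le_of_lt hC)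
      rw [← Real.sqrt_eq_rpow]
      exact Real.sqrt_le_sqrt (by linarith)
    have h2 : (Nat.nth Nat.Prime N : ℝ) ^ (-w.re) ≤ ((N:ℝ)+1) ^ (-w.re) := by
      have hp : (0:ℝ) < (N:ℝ) + 1 := by positivity
      rw [Real.rpow_neg (le_of_lt hp), Real.rpow_neg (le_of_lt (nth_prime_cast_pos N))]
      apply inv_anti₀ (Real.rpow_pos_of_pos hp _)
      apply Real.rpow_le_rpow (le_of_lt hp) _ (by linarith)
      exact_mod_cast nth_prime_ge N
    calc ‖AA a N‖ * (Nat.nth Nat.Prime N : ℝ) ^ (-w.re)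
        ≤ (C * ((N:ℝ)+1) ^ ((1:ℝ)/2)) * (((N:ℝ)+1) ^ (-w.re)) := by
          apply mul_le_mul h1 h2 (Real.rpow_nonneg (le_of_lt (nth_prime_cast_pos N)) _)
          positivity
      _ = C * ((N:ℝ)+1) ^ (1/2 - w.re) := by
          rw [mul_assoc, ← Real.rpow_add (by positivity)]
          ring_nf
  · have h0 : Tendsto (fun x : ℝ => x ^ (-(w.re - 1/2))) atTop (𝓝 0) :=
      tendsto_rpow_neg_atTop (by linarith)
    have h1 : Tendsto (fun N : ℕ => (N:ℝ) + 1) atTop atTop :=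
      tendsto_atTop_add_const_right _ _ tendsto_natCast_atTop_atTop
    have h2 := h0.comp h1
    have h3 := h2.const_mul C
    rw [mul_zero] at h3
    apply h3.congr
    intro N
    simp only [Function.comp]
    ring_nf

private lemma prod_tendsto_GG {a : ℕ → ℂ} {C : ℝ} (hC : 0 < C) (ha1 : ∀ n, ‖a n‖ ≤ 1)
    (hAb : ∀ N : ℕ, ‖AA a N‖ ≤ C * Real.sqrt N) {w : ℂ} (hw : 1/2 < w.re) :
    Tendsto (fun N : ℕ => ∏ n ∈ Finset.range N, (1 - ff a w n)⁻¹) atTop (𝓝 (GG a w)) := by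
  set σ₀ : ℝ := (1/2 + w.re)/2 with hσ₀def
  have hσ : 1/2 < σ₀ := by rw [hσ₀def]; linarith
  have hσw : σ₀ ≤ w.re := by rw [hσ₀def]; linarith
  have hS : Summable (fun n => AA a (n+1) * (bb w n - bb w (n+1))) :=
    S_summable (le_of_lt hC) hσ hAb hσw (le_refl ‖w‖)
  have hsumS : Tendsto (fun N : ℕ => ∑ n ∈ Finset.range N, AA a (n+1) * (bb w n - bb w (n+1)))
      atTop (𝓝 (SS a w)) := hS.hasSum.tendsto_sum_nat
  have hbdry := boundary_tendsto hC hAb hw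
  have hfsum : Tendsto (fun N : ℕ => ∑ n ∈ Finset.range N, ff a w n) atTop (𝓝 (SS a w)) := by
    have hcomb := hbdry.add hsumS
    rw [zero_add] at hcomb
    apply hcomb.congr
    intro N
    exact (abel_identity a (bb w) N).symm
  have hR : Summable (fun n => Complex.log (1 - ff a w n)⁻¹ - ff a w n) :=
    R_summable ha1 hσ hσw
  have hRsum : Tendsto (fun N : ℕ => ∑ n ∈ Finset.range N,
      (Complex.log (1 - ff a w n)⁻¹ - ff a w n)) atTop (𝓝 (RR a w)) :=
    hR.hasSum.tendsto_sum_nat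
  have hlog : Tendsto (fun N : ℕ => ∑ n ∈ Finset.range N, Complex.log (1 - ff a w n)⁻¹)
      atTop (𝓝 (RR a w + SS a w)) := by
    have hcomb := hRsum.add hfsum
    apply hcomb.congr
    intro N
    rw [← Finset.sum_add_distrib]
    apply Finset.sum_congr rfl
    intros; ring
  have hexp := (Complex.continuous_exp.continuousAt (x := RR a w + SS a w)).tendsto.comp hlog
  have hGG : GG a w = Complex.exp (RR a w + SS a w) := by rw [GG, add_comm]
  rw [hGG]
  apply hexp.congr
  intro N
  simp only [Function.comp]
  rw [Complex.exp_sum]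
  apply Finset.prod_congr rfl
  intro n _
  rw [Complex.exp_log (inv_ne_zero (one_sub_ff_ne ha1 (le_of_lt hw) n))]
private noncomputable def primeEquiv : ℕ ≃ Nat.Primes :=
  Equiv.ofBijective (fun n => ⟨Nat.nth Nat.Prime n, Nat.prime_nth_prime n⟩)
    ⟨fun m n h => Nat.nth_injective Nat.infinite_setOf_prime (congrArg Subtype.val h),
     fun q => by
      have : q.1 ∈ Set.range (Nat.nth Nat.Prime) := by
        rw [Nat.range_nth_of_infinite Nat.infinite_setOf_prime]
        exact q.2
      obtain ⟨n, hn⟩ := this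
      exact ⟨n, Subtype.ext hn⟩⟩

private lemma prod_tendsto_L {k : ℕ} [NeZero k] (χ : DirichletCharacter ℂ k) (t : ℝ)
    {w : ℂ} (hw : 1 < w.re) :
    Tendsto (fun N : ℕ => ∏ n ∈ Finset.range N,
        (1 - ff (fun n => χ (Nat.nth Nat.Prime n) *
          ((Nat.nth Nat.Prime n : ℕ) : ℂ) ^ (-(I * (t:ℂ)))) w n)⁻¹)
      atTop (𝓝 (DirichletCharacter.LFunction χ (w + I * t))) := by
  have hz : 1 < (w + I * t).re := by
    simp only [Complex.add_re, Complex.mul_re, Complex.I_re, Complex.I_im,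
      Complex.ofReal_re, Complex.ofReal_im]
    ring_nf
    simpa using hw
  have hprod := DirichletCharacter.LSeries_eulerProduct_hasProd χ hz
  have hL : DirichletCharacter.LFunction χ (w + I * t) = LSeries (χ ·) (w + I * t) :=
    DirichletCharacter.LFunction_eq_LSeries χ hz
  rw [hL]
  have hprod2 := (primeEquiv.hasProd_iff).mpr hprod
  have heq : ((fun p : Nat.Primes => (1 - χ ↑p * (p : ℂ) ^ (-(w + I * t)))⁻¹) ∘ primeEquiv)
      = fun n : ℕ => (1 - ff (fun n => χ (Nat.nth Nat.Prime n) *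
          ((Nat.nth Nat.Prime n : ℕ) : ℂ) ^ (-(I * (t:ℂ)))) w n)⁻¹ := by
    funext n
    simp only [Function.comp, ff, bb]
    have hpe : ((primeEquiv n : Nat.Primes) : ℕ) = Nat.nth Nat.Prime n := rfl
    rw [hpe]
    congr 2
    rw [show -(w + I * (t:ℂ)) = -(I * t) + -w by ring,
      Complex.cpow_add _ _ (bb_ne_cast n)]
    ring
  rw [heq] at hprod2
  exact hprod2.tendsto_prod_nat
/-- Let `χ` be a non-principal Dirichlet character mod `k`.  If for every real
`t` there is a constant `C > 0` with `|∑_{n=1}^N χ(p_n) p_n^{-it}| ≤ C √N` for all `N`, then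
for every `s` with `Re(s) > 1/2` the Euler product `∏_n (1 − χ(p_n) p_n^{-s})⁻¹` converges
to `L(s, χ)`, and in particular `L(s, χ) ≠ 0`. -/
theorem nonprincipal_euler_product_RH (k : ℕ) [NeZero k] (χ : DirichletCharacter ℂ k)
    (hχ : χ ≠ 1)
    (hrw : ∀ t : ℝ, ∃ C : ℝ, 0 < C ∧ ∀ N : ℕ, 0 < N →
      ‖∑ n ∈ Finset.range N,
          χ (Nat.nth Nat.Prime n) * ((Nat.nth Nat.Prime n : ℕ) : ℂ) ^ (-(I * t))‖ ≤
        C * Real.sqrt N) :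
    ∀ s : ℂ, 1 / 2 < s.re →
      Tendsto (fun N : ℕ => ∏ n ∈ Finset.range N,
          (1 - χ (Nat.nth Nat.Prime n) * ((Nat.nth Nat.Prime n : ℕ) : ℂ) ^ (-s))⁻¹)
        atTop (nhds (DirichletCharacter.LFunction χ s)) ∧
      DirichletCharacter.LFunction χ s ≠ 0 := by
  intro s hs
  obtain ⟨C, hC, hCb⟩ := hrw s.im
  set a : ℕ → ℂ := fun n => χ (Nat.nth Nat.Prime n) *
    ((Nat.nth Nat.Prime n : ℕ) : ℂ) ^ (-(I * (s.im : ℂ))) with hadef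
  have ha1 : ∀ n, ‖a n‖ ≤ 1 := by
    intro n
    rw [hadef]
    simp only [norm_mul]
    have h2 : ‖((Nat.nth Nat.Prime n : ℕ) : ℂ) ^ (-(I * (s.im:ℂ)))‖ = 1 := by
      rw [Complex.norm_natCast_cpow_of_pos (by have := nth_prime_ge n; omega)]
      simp only [Complex.neg_re, Complex.mul_re, Complex.I_re, Complex.I_im,
        Complex.ofReal_re, Complex.ofReal_im]
      norm_num
    rw [h2, mul_one]
    exact χ.norm_le_one _
  have hAb : ∀ N : ℕ, ‖AA a N‖ ≤ C * Real.sqrt N := by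
    intro N
    rcases Nat.eq_zero_or_pos N with h | h
    · subst h
      simp [AA]
    · exact hCb N h
  have hUopen : IsOpen {w : ℂ | 1/2 < w.re} := isOpen_lt continuous_const Complex.continuous_re
  have hGdiff : DifferentiableOn ℂ (GG a) {w : ℂ | 1/2 < w.re} := by
    have := ((S_diffOn (le_of_lt hC) hAb).add (R_diffOn ha1)).cexp
    exact this
  have hLdiff : Differentiable ℂ (fun w : ℂ => DirichletCharacter.LFunction χ (w + I * s.im)) :=
    (DirichletCharacter.differentiable_LFunction hχ).comp
      (differentiable_id.add (differentiable_const _))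
  have hone : IsOpen {w : ℂ | 1 < w.re} := isOpen_lt continuous_const Complex.continuous_re
  have hmem2 : (2:ℂ) ∈ {w : ℂ | 1 < w.re} := by norm_num [Set.mem_setOf_eq]
  have hEq : Set.EqOn (GG a) (fun w => DirichletCharacter.LFunction χ (w + I * s.im))
      {w : ℂ | 1/2 < w.re} := by
    apply AnalyticOnNhd.eqOn_of_preconnected_of_eventuallyEq
      (hGdiff.analyticOnNhd hUopen) (hLdiff.differentiableOn.analyticOnNhd hUopen)
      ((convex_halfSpace_re_gt (1/2)).isPreconnected)
      (show (2:ℂ) ∈ {w : ℂ | 1/2 < w.re} by norm_num [Set.mem_setOf_eq])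
    apply Filter.eventuallyEq_of_mem (hone.mem_nhds hmem2)
    intro w hw
    have hw1 : 1 < w.re := hw
    exact tendsto_nhds_unique (prod_tendsto_GG hC ha1 hAb (by linarith))
      (prod_tendsto_L χ s.im hw1)
  set w₀ : ℂ := (s.re : ℂ) with hw₀def
  have hw₀re : w₀.re = s.re := Complex.ofReal_re s.re
  have hw₀U : w₀ ∈ {w : ℂ | 1/2 < w.re} := by rw [Set.mem_setOf_eq, hw₀re]; exact hs
  have hw₀s : w₀ + I * s.im = s := by
    rw [hw₀def, mul_comm]
    exact Complex.re_add_im s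
  have hGLs : GG a w₀ = DirichletCharacter.LFunction χ s := by
    have := hEq hw₀U
    simpa [hw₀s] using this
  have hGw := prod_tendsto_GG hC ha1 hAb (show 1/2 < w₀.re by rw [hw₀re]; exact hs)
  have hff : ∀ n : ℕ, ff a w₀ n = χ (Nat.nth Nat.Prime n) *
      ((Nat.nth Nat.Prime n : ℕ) : ℂ) ^ (-s) := by
    intro n
    rw [ff, bb, hadef]
    have hexp : -(I * (s.im:ℂ)) + -w₀ = -s := by
      rw [hw₀def]
      linear_combination -(Complex.re_add_im s)
    rw [mul_assoc, ← Complex.cpow_add _ _ (bb_ne_cast n), hexp]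
  constructor
  · rw [← hGLs]
    apply hGw.congr
    intro N
    apply Finset.prod_congr rfl
    intro n _
    rw [hff n]
  · rw [← hGLs]
    exact Complex.exp_ne_zero _
end

section
/- For every fixed positive integer N, with B_N(u) = Σ_{n=1}^N cos(u·log p_n) where p_n is the n-th prime, one has lim_{T→∞} (1/T) ∫_T^{2T} B_N(u) du = 0 and lim_{T→∞} (1/T) ∫_T^{2T} B_N(u)² du = N/2. That is, with respect to the uniform distribution on [T, 2T], the mean of B_N tends to 0 and its second moment tends to N/2 as T → ∞. -/
open MeasureTheory Filter intervalIntegral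

private lemma cos_int' (c : ℝ) (hc : c ≠ 0) (T : ℝ) :
    ∫ u in T..(2*T), Real.cos (u * c) = c⁻¹ * (Real.sin (2*T*c) - Real.sin (T*c)) := by
  rw [intervalIntegral.integral_comp_mul_right Real.cos hc, integral_cos, smul_eq_mul]

private lemma tendsto_avg_cos (c : ℝ) (hc : c ≠ 0) :
    Tendsto (fun T : ℝ => (1 / T) * ∫ u in T..(2 * T), Real.cos (u * c)) atTop (nhds 0) := by
  have h0 : Tendsto (fun T : ℝ => (1/T) * (2 / |c|)) atTop (nhds 0) := by
    have := (tendsto_inv_atTop_zero (𝕜 := ℝ)).mul_const (2 / |c|)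
    simpa [one_div] using this
  apply squeeze_zero_norm' _ h0
  filter_upwards [eventually_ge_atTop (1:ℝ)] with T hT
  have hT0 : (0:ℝ) < T := lt_of_lt_of_le one_pos hT
  rw [cos_int' c hc T, norm_mul, Real.norm_eq_abs (1/T), abs_of_pos (by positivity)]
  gcongr
  have hs : |Real.sin (2*T*c) - Real.sin (T*c)| ≤ 2 := by
    have h1 := Real.neg_one_le_sin (2*T*c); have h2 := Real.sin_le_one (2*T*c)
    have h3 := Real.neg_one_le_sin (T*c); have h4 := Real.sin_le_one (T*c)
    rw [abs_le]; constructor <;> linarith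
  calc ‖c⁻¹ * (Real.sin (2*T*c) - Real.sin (T*c))‖
      = |c|⁻¹ * |Real.sin (2*T*c) - Real.sin (T*c)| := by
        rw [norm_mul, Real.norm_eq_abs, Real.norm_eq_abs, abs_inv]
    _ ≤ |c|⁻¹ * 2 := by gcongr
    _ = 2 / |c| := by rw [div_eq_mul_inv, mul_comm]

private lemma avg_half_cos (c : ℝ) :
    Tendsto (fun T : ℝ => (1 / T) * ∫ u in T..(2 * T), (1/2) * Real.cos (u * c)) atTop
      (nhds (if c = 0 then 1/2 else 0)) := by
  by_cases hc : c = 0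
  · subst hc
    simp only [if_pos rfl]
    have heq : ∀ᶠ T in atTop, (1 / T) * (∫ u in T..(2 * T), (1/2) * Real.cos (u * 0)) = 1/2 := by
      filter_upwards [eventually_gt_atTop (0:ℝ)] with T hT
      simp only [mul_zero, Real.cos_zero, mul_one, intervalIntegral.integral_const, smul_eq_mul]
      field_simp; ring
    exact Tendsto.congr' (heq.mono fun T h => h.symm) tendsto_const_nhds
  · simp only [if_neg hc]
    have heq : ∀ T : ℝ, (1 / T) * (∫ u in T..(2 * T), (1/2) * Real.cos (u * c))
        = (1/2) * ((1 / T) * ∫ u in T..(2 * T), Real.cos (u * c)) := by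
      intro T; rw [intervalIntegral.integral_const_mul]; ring
    simp only [heq]
    have := (tendsto_avg_cos c hc).const_mul (1/2 : ℝ)
    simpa using this

private lemma cont_cos (c : ℝ) : Continuous fun u : ℝ => Real.cos (u * c) :=
  Real.continuous_cos.comp (continuous_id.mul continuous_const)

private lemma avg_pair (x y : ℝ) :
    Tendsto (fun T : ℝ => (1 / T) *
      ∫ u in T..(2 * T), ((1/2) * Real.cos (u * x) + (1/2) * Real.cos (u * y))) atTop
      (nhds ((if x = 0 then 1/2 else 0) + (if y = 0 then 1/2 else 0))) := by
  have heq : ∀ T : ℝ, (1 / T) *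
      (∫ u in T..(2 * T), ((1/2) * Real.cos (u * x) + (1/2) * Real.cos (u * y)))
      = (1 / T) * (∫ u in T..(2 * T), (1/2) * Real.cos (u * x))
        + (1 / T) * (∫ u in T..(2 * T), (1/2) * Real.cos (u * y)) := by
    intro T
    rw [intervalIntegral.integral_add (f := fun u => (1/2:ℝ) * Real.cos (u * x))
      (g := fun u => (1/2:ℝ) * Real.cos (u * y))
      ((continuous_const.mul (cont_cos x)).intervalIntegrable _ _)
      ((continuous_const.mul (cont_cos y)).intervalIntegrable _ _)]
    ring
  simp only [heq]
  exact (avg_half_cos x).add (avg_half_cos y)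

/-- For every fixed positive integer `N`, with
`B_N(u) = ∑_{n=1}^N cos(u log p_n)`, the mean of `B_N` over `[T, 2T]` tends to `0` and the
mean of `B_N²` over `[T, 2T]` tends to `N/2` as `T → ∞`. -/
theorem BN_moments (N : ℕ) (hN : 0 < N) (B : ℕ → ℝ → ℝ)
    (hB : ∀ N u, B N u = ∑ n ∈ Finset.range N, Real.cos (u * Real.log (Nat.nth Nat.Prime n))) :
    Tendsto (fun T : ℝ => (1 / T) * ∫ u in T..(2 * T), B N u) atTop (nhds 0) ∧
    Tendsto (fun T : ℝ => (1 / T) * ∫ u in T..(2 * T), (B N u) ^ 2) atTop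
      (nhds ((N : ℝ) / 2)) := by
  set a : ℕ → ℝ := fun n => Real.log (Nat.nth Nat.Prime n) with ha
  have ha_pos : ∀ n, 0 < a n := by
    intro n
    apply Real.log_pos
    have h2 := (Nat.prime_nth_prime n).two_le
    exact_mod_cast lt_of_lt_of_le one_lt_two (by exact_mod_cast h2)
  have ha_inj : ∀ p q, a p = a q → p = q := by
    intro p q h
    have hp : (0:ℝ) < (Nat.nth Nat.Prime p : ℝ) := by
      exact_mod_cast (Nat.prime_nth_prime p).pos
    have hq : (0:ℝ) < (Nat.nth Nat.Prime q : ℝ) := by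
      exact_mod_cast (Nat.prime_nth_prime q).pos
    have : (Nat.nth Nat.Prime p : ℝ) = (Nat.nth Nat.Prime q : ℝ) :=
      Real.log_injOn_pos (Set.mem_Ioi.mpr hp) (Set.mem_Ioi.mpr hq) h
    have hnn : Nat.nth Nat.Prime p = Nat.nth Nat.Prime q := by exact_mod_cast this
    exact Nat.nth_injective Nat.infinite_setOf_prime hnn
  constructor
  · -- first moment
    have h1 : ∀ T : ℝ, ∫ u in T..(2 * T), B N u
        = ∑ n ∈ Finset.range N, ∫ u in T..(2 * T), Real.cos (u * a n) := by
      intro T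
      simp only [hB]
      exact intervalIntegral.integral_finset_sum (fun n _ => (cont_cos (a n)).intervalIntegrable _ _)
    simp only [h1, Finset.mul_sum]
    have := tendsto_finset_sum (Finset.range N)
      (fun n _ => tendsto_avg_cos (a n) (ne_of_gt (ha_pos n)))
    simpa using this
  · -- second moment
    have hBsq : ∀ u : ℝ, (B N u) ^ 2 = ∑ p ∈ Finset.range N, ∑ q ∈ Finset.range N,
        ((1/2) * Real.cos (u * (a p - a q)) + (1/2) * Real.cos (u * (a p + a q))) := by
      intro u
      rw [hB, sq, Finset.sum_mul_sum]
      refine Finset.sum_congr rfl fun p _ => Finset.sum_congr rfl fun q _ => ?_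
      rw [mul_sub, mul_add, Real.cos_sub, Real.cos_add]
      ring
    have h2 : ∀ T : ℝ, ∫ u in T..(2 * T), (B N u) ^ 2
        = ∑ p ∈ Finset.range N, ∑ q ∈ Finset.range N, ∫ u in T..(2 * T),
          ((1/2) * Real.cos (u * (a p - a q)) + (1/2) * Real.cos (u * (a p + a q))) := by
      intro T
      have hc2 : ∀ p q : ℕ, Continuous fun u : ℝ =>
          (1/2) * Real.cos (u * (a p - a q)) + (1/2) * Real.cos (u * (a p + a q)) :=
        fun p q => (continuous_const.mul (cont_cos _)).add (continuous_const.mul (cont_cos _))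
      simp only [hBsq]
      rw [intervalIntegral.integral_finset_sum
        (fun p _ => (continuous_finset_sum _ (fun q _ => hc2 p q)).intervalIntegrable _ _)]
      exact Finset.sum_congr rfl fun p _ =>
        intervalIntegral.integral_finset_sum (fun q _ => (hc2 p q).intervalIntegrable _ _)
    simp only [h2, Finset.mul_sum]
    have hlim := tendsto_finset_sum (Finset.range N) (fun p _ =>
      tendsto_finset_sum (Finset.range N) (fun q _ =>
        avg_pair (a p - a q) (a p + a q)))
    have hval : (∑ p ∈ Finset.range N, ∑ q ∈ Finset.range N,
        ((if a p - a q = 0 then (1:ℝ)/2 else 0) + (if a p + a q = 0 then (1:ℝ)/2 else 0)))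
        = (N : ℝ) / 2 := by
      have : ∀ p q : ℕ, ((if a p - a q = 0 then (1:ℝ)/2 else 0)
          + (if a p + a q = 0 then (1:ℝ)/2 else 0)) = if p = q then (1:ℝ)/2 else 0 := by
        intro p q
        have hsum : a p + a q ≠ 0 := ne_of_gt (by have := ha_pos p; have := ha_pos q; linarith)
        rw [if_neg hsum, add_zero]
        by_cases h : p = q
        · subst h; simp
        · rw [if_neg h, if_neg]
          intro hc
          exact h (ha_inj p q (sub_eq_zero.mp hc))
      simp only [this]
      rw [Finset.sum_congr rfl (fun p hp => Finset.sum_ite_eq (Finset.range N) p (fun _ => (1:ℝ)/2))]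
      rw [Finset.sum_congr rfl (fun p hp => if_pos hp), Finset.sum_const, Finset.card_range,
        nsmul_eq_mul]
      ring
    rw [← hval]
    exact hlim
end
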